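/- In the complete-randomization setting with N ≥ 3, let Q_U ⊆ {1,…,Q} be a set of arms with N_q = 1 for every q ∈ Q_U, and let 𝒢 be a fixed partition of Q_U into groups g of size |g| ≥ 2. For q ∈ Q_U write Y_q for the observed outcome in arm q (Y_q = Y_i(q) for the unique i with Z_i = q), Ŷ_g = |g|^{-1} ∑_{q∈g} Y_q, Ȳ_g = |g|^{-1} ∑_{q∈g} Ȳ(q), μ_g = (1 − 2/N)^{-1}(1 − 1/|g|)^{-2}, and V̂(q,q) = μ_g (Y_q − Ŷ_g)² for q ∈ g. Assume S(q,q) > 0 for all q ∈ Q_U, and let ρ_g be the largest eigenvalue of the correlation submatrix ( S(q,q')/√(S(q,q)S(q',q')) )_{q,q'∈g}. Then: (a) E[Ŷ_g] = Ȳ_g for every g ∈ 𝒢; (b) if N − ρ_g − (|g|−1) ≥ 0 for a group g, then for every q ∈ g, E[V̂(q,q)] ≥ S(q,q) + Ω(q,q) + μ_g (Ȳ(q) − Ȳ_g)², where Ω(q,q) = μ_g |g|^{-2} (1 − ρ_g/N − (|g|−1)/N) ∑_{q'∈g, q'≠q} S(q',q') ≥ 0. -/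

import Mathlib

open Finset Matrix MeasureTheory ProbabilityTheory
open scoped Classical

noncomputable section

/-- Expectation with respect to the uniform distribution on the symmetric group of
permutations of `{1,…,N}`. -/
def pexp {N : ℕ} (f : Equiv.Perm (Fin N) → ℝ) : ℝ :=
  (∑ π : Equiv.Perm (Fin N), f π) / (Nat.factorial N : ℝ)

/-- Probability with respect to the uniform distribution on permutations of `{1,…,N}`. -/
def pprob {N : ℕ} (p : Equiv.Perm (Fin N) → Prop) : ℝ :=
  pexp (fun π => if p π then (1 : ℝ) else 0)

/-- Mean potential outcome `Ȳ(q)`. -/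
def Ybar {N Q : ℕ} (Y : Fin N → Fin Q → ℝ) (q : Fin Q) : ℝ :=
  (∑ i, Y i q) / (N : ℝ)

/-- Finite-population covariance `S(q,q')`. -/
def Svar {N Q : ℕ} (Y : Fin N → Fin Q → ℝ) (q q' : Fin Q) : ℝ :=
  (∑ i, (Y i q - Ybar Y q) * (Y i q' - Ybar Y q')) / ((N : ℝ) - 1)

/-- Maximum absolute deviation `M_N(q)`. -/
def MNdev {N Q : ℕ} (Y : Fin N → Fin Q → ℝ) (q : Fin Q) : ℝ :=
  ⨆ i : Fin N, |Y i q - Ybar Y q|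

/-- Sample mean `Ŷ_q` in arm `q` under the assignment `Z_i = z(π(i))`. -/
def Yhat {N Q : ℕ} (Y : Fin N → Fin Q → ℝ) (z : Fin N → Fin Q) (Nq : Fin Q → ℕ)
    (π : Equiv.Perm (Fin N)) (q : Fin Q) : ℝ :=
  (∑ i, if z (π i) = q then Y i q else 0) / (Nq q : ℝ)

/-- The covariance matrix `V_Ŷ = diag(N_q⁻¹ S(q,q)) − N⁻¹ S`. -/
def VYmat {N Q : ℕ} (Y : Fin N → Fin Q → ℝ) (Nq : Fin Q → ℕ) :
    Matrix (Fin Q) (Fin Q) ℝ :=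
  Matrix.of fun q q' =>
    (if q = q' then Svar Y q q / (Nq q : ℝ) else 0) - Svar Y q q' / (N : ℝ)

/-- Smallest eigenvalue of a (symmetric) matrix, via the Rayleigh quotient. -/
def lamMin {n : Type*} [Fintype n] (A : Matrix n n ℝ) : ℝ :=
  ⨅ x : {x : n → ℝ // (∑ i, x i ^ 2) = 1}, x.1 ⬝ᵥ A.mulVec x.1

/-- Largest eigenvalue of a (symmetric) matrix, via the Rayleigh quotient. -/
def lamMax {n : Type*} [Fintype n] (A : Matrix n n ℝ) : ℝ :=
  ⨆ x : {x : n → ℝ // (∑ i, x i ^ 2) = 1}, x.1 ⬝ᵥ A.mulVec x.1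

/-- Standard normal cumulative distribution function. -/
def stdNormalCDF (t : ℝ) : ℝ :=
  ∫ x in Set.Iic t, (Real.sqrt (2 * Real.pi))⁻¹ * Real.exp (-(x ^ 2) / 2)

/-- The standard Gaussian measure on `ℝ^H`. -/
def gaussianPi (H : ℕ) : Measure (Fin H → ℝ) :=
  Measure.pi fun _ : Fin H => gaussianReal 0 1

/-- Condition 1 with parameter `σF`:
`Fᵀ diag(N_q⁻¹ S(q,q)) F ⪯ σF² Fᵀ V_Ŷ F` in the Loewner order. -/
def CondOne {N Q H : ℕ} (Y : Fin N → Fin Q → ℝ) (Nq : Fin Q → ℕ)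
    (F : Matrix (Fin Q) (Fin H) ℝ) (σF : ℝ) : Prop :=
  (σF ^ 2 • (Fᵀ * VYmat Y Nq * F) -
    Fᵀ * Matrix.diagonal (fun q => Svar Y q q / (Nq q : ℝ)) * F).PosSemidef

/-- Condition 2 (proper contrast) with parameters `c, c'`. -/
def CondTwo {Q H : ℕ} (F : Matrix (Fin Q) (Fin H) ℝ) (c c' : ℝ) : Prop :=
  (∀ q h, |F q h| ≤ c / (Q : ℝ)) ∧ c' / (Q : ℝ) ≤ lamMin (Fᵀ * F)

/-- The standardized estimator `γ̃ = V_γ̂^{-1/2}(γ̂ − γ)`. -/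
def tgam {N Q H : ℕ} (Y : Fin N → Fin Q → ℝ) (z : Fin N → Fin Q) (Nq : Fin Q → ℕ)
    (F : Matrix (Fin Q) (Fin H) ℝ) (hpd : (Fᵀ * VYmat Y Nq * F).PosDef)
    (π : Equiv.Perm (Fin N)) : Fin H → ℝ :=
  (((hpd.posSemidef.isHermitian.eigenvectorUnitary : Matrix (Fin H) (Fin H) ℝ) *
      Matrix.diagonal (Real.sqrt ∘ hpd.posSemidef.isHermitian.eigenvalues) *
      (star hpd.posSemidef.isHermitian.eigenvectorUnitary : Matrix (Fin H) (Fin H) ℝ))⁻¹).mulVec (Fᵀ.mulVec (Yhat Y z Nq π) - Fᵀ.mulVec (Ybar Y))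

/-- Observed outcome `Y_q` in an unreplicated arm `q` (the sum over the unique unit
assigned to arm `q` when `N_q = 1`). -/
def Yobs {N Q : ℕ} (Y : Fin N → Fin Q → ℝ) (z : Fin N → Fin Q)
    (π : Equiv.Perm (Fin N)) (q : Fin Q) : ℝ :=
  ∑ i, if z (π i) = q then Y i q else 0

/-- Group-specific average `Ŷ_g` of the observed outcomes. -/
def Yhatg {N Q : ℕ} (Y : Fin N → Fin Q → ℝ) (z : Fin N → Fin Q)
    (π : Equiv.Perm (Fin N)) (g : Finset (Fin Q)) : ℝ :=
  (∑ q ∈ g, Yobs Y z π q) / (g.card : ℝ)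

/-- Group-specific average `Ȳ_g` of the mean potential outcomes. -/
def Ybarg {N Q : ℕ} (Y : Fin N → Fin Q → ℝ) (g : Finset (Fin Q)) : ℝ :=
  (∑ q ∈ g, Ybar Y q) / (g.card : ℝ)

/-- Correction factor `μ_g = (1 − 2/N)⁻¹ (1 − 1/|g|)⁻²`. -/
def muG {Q : ℕ} (N : ℕ) (g : Finset (Fin Q)) : ℝ :=
  (1 - 2 / (N : ℝ))⁻¹ * ((1 - (g.card : ℝ)⁻¹) ^ 2)⁻¹

/-- `ρ_g`: largest eigenvalue of the correlation submatrix of the potential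
outcomes within the group `g`. -/
def rhoG {N Q : ℕ} (Y : Fin N → Fin Q → ℝ) (g : Finset (Fin Q)) : ℝ :=
  lamMax (Matrix.of fun a b : {q : Fin Q // q ∈ g} =>
    Svar Y a.1 b.1 / Real.sqrt (Svar Y a.1 a.1 * Svar Y b.1 b.1))


section Helpers

lemma pexp_sum {N : ℕ} {α : Type*} (s : Finset α) (f : α → Equiv.Perm (Fin N) → ℝ) :
    pexp (fun π => ∑ a ∈ s, f a π) = ∑ a ∈ s, pexp (f a) := by
  unfold pexp
  rw [Finset.sum_comm, Finset.sum_div]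

lemma pexp_const {N : ℕ} (c : ℝ) : pexp (fun _ : Equiv.Perm (Fin N) => c) = c := by
  unfold pexp
  rw [Finset.sum_const, Finset.card_univ, Fintype.card_perm, Fintype.card_fin, nsmul_eq_mul]
  have : (Nat.factorial N : ℝ) ≠ 0 := Nat.cast_ne_zero.mpr (Nat.factorial_ne_zero N)
  field_simp

lemma pexp_smul {N : ℕ} (r : ℝ) (f : Equiv.Perm (Fin N) → ℝ) :
    pexp (fun π => r * f π) = r * pexp f := by
  unfold pexp
  rw [← Finset.mul_sum, mul_div_assoc]

lemma pexp_div {N : ℕ} (f : Equiv.Perm (Fin N) → ℝ) (c : ℝ) :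
    pexp (fun π => f π / c) = pexp f / c := by
  unfold pexp
  rw [← Finset.sum_div, div_div, mul_comm, ← div_div]

lemma pexp_comp_mulRight {N : ℕ} (τ : Equiv.Perm (Fin N)) (f : Equiv.Perm (Fin N) → ℝ) :
    pexp (fun π => f (π * τ)) = pexp f := by
  unfold pexp
  congr 1
  simpa using Equiv.sum_comp (Equiv.mulRight τ) f

lemma pexp_comp_inv {N : ℕ} (f : Equiv.Perm (Fin N) → ℝ) :
    pexp (fun π : Equiv.Perm (Fin N) => f π⁻¹) = pexp f := by
  unfold pexp
  congr 1
  simpa using Equiv.sum_comp (Equiv.inv (Equiv.Perm (Fin N))) f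

lemma exists_swap_pair {α : Type*} [DecidableEq α] {a b a' b' : α} (hab : a ≠ b) (hab' : a' ≠ b') :
    ∃ τ : Equiv.Perm α, τ a = a' ∧ τ b = b' := by
  refine ⟨Equiv.swap (Equiv.swap a a' b) b' * Equiv.swap a a', ?_, ?_⟩
  · have hca' : Equiv.swap a a' b ≠ a' := by
      by_cases h : b = a'
      · subst h
        rw [Equiv.swap_apply_right]
        intro hh; exact hab hh
      · rw [Equiv.swap_apply_of_ne_of_ne hab.symm h]
        exact h
    simp only [Equiv.Perm.mul_apply, Equiv.swap_apply_left]
    exact Equiv.swap_apply_of_ne_of_ne hca'.symm hab'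
  · simp only [Equiv.Perm.mul_apply, Equiv.swap_apply_left]

lemma pexp_single {N : ℕ} (hN : 0 < N) (G : Fin N → ℝ) (a : Fin N) :
    pexp (fun π => G (π a)) = (∑ i, G i) / (N : ℝ) := by
  have hconst : ∀ a' : Fin N, pexp (fun π => G (π a')) = pexp (fun π => G (π a)) := by
    intro a'
    have h := pexp_comp_mulRight (Equiv.swap a a') (fun π => G (π a))
    simpa [Equiv.Perm.mul_apply, Equiv.swap_apply_left] using h
  have hsum : ∑ a' : Fin N, pexp (fun π => G (π a')) = ∑ i, G i := by
    rw [← pexp_sum]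
    have h1 : (fun π : Equiv.Perm (Fin N) => ∑ a' : Fin N, G (π a')) = fun _ => ∑ i, G i := by
      funext π
      exact Equiv.sum_comp π G
    rw [h1, pexp_const]
  rw [Finset.sum_congr rfl (fun a' _ => hconst a'), Finset.sum_const, Finset.card_univ,
    Fintype.card_fin, nsmul_eq_mul] at hsum
  have hN' : (N : ℝ) ≠ 0 := Nat.cast_ne_zero.mpr hN.ne'
  field_simp [eq_div_iff hN'] at hsum ⊢
  linarith [hsum]

lemma pexp_pair {N : ℕ} (hN : 2 ≤ N) (G : Fin N → Fin N → ℝ) {a b : Fin N} (hab : a ≠ b) :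
    pexp (fun π => G (π a) (π b))
      = (∑ i, ∑ j ∈ Finset.univ.erase i, G i j) / ((N : ℝ) * ((N : ℝ) - 1)) := by
  have hconst : ∀ a' b' : Fin N, a' ≠ b' →
      pexp (fun π => G (π a') (π b')) = pexp (fun π => G (π a) (π b)) := by
    intro a' b' h
    obtain ⟨τ, h1, h2⟩ := exists_swap_pair hab h
    have := pexp_comp_mulRight τ (fun π => G (π a) (π b))
    simpa [Equiv.Perm.mul_apply, h1, h2] using this
  have hπ : ∀ π : Equiv.Perm (Fin N),
      (∑ a' : Fin N, ∑ b' ∈ Finset.univ.erase a', G (π a') (π b'))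
        = ∑ i, ∑ j ∈ Finset.univ.erase i, G i j := by
    intro π
    have herase : ∀ (H : Fin N → Fin N → ℝ) (x : Fin N),
        ∑ j ∈ Finset.univ.erase x, H x j = (∑ j, H x j) - H x x := by
      intro H x
      rw [eq_sub_iff_add_eq, Finset.sum_erase_add _ _ (Finset.mem_univ x)]
    calc (∑ a' : Fin N, ∑ b' ∈ Finset.univ.erase a', G (π a') (π b'))
        = ∑ a' : Fin N, ((∑ j, G (π a') j) - G (π a') (π a')) := by
          refine Finset.sum_congr rfl fun x _ => ?_
          rw [eq_sub_iff_add_eq, Finset.sum_erase_add _ _ (Finset.mem_univ x)]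
          exact Equiv.sum_comp π (fun j => G (π x) j)
      _ = (∑ a' : Fin N, ∑ j, G (π a') j) - ∑ a' : Fin N, G (π a') (π a') :=
          Finset.sum_sub_distrib _ _
      _ = (∑ i, ∑ j, G i j) - ∑ i, G i i := by
          rw [Equiv.sum_comp π (fun i => ∑ j, G i j), Equiv.sum_comp π (fun i => G i i)]
      _ = ∑ i, ((∑ j, G i j) - G i i) := (Finset.sum_sub_distrib _ _).symm
      _ = ∑ i, ∑ j ∈ Finset.univ.erase i, G i j := by
          exact Finset.sum_congr rfl fun x _ => (herase G x).symm
  have hsum : ∑ a' : Fin N, ∑ b' ∈ Finset.univ.erase a',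
      pexp (fun π => G (π a') (π b')) = ∑ i, ∑ j ∈ Finset.univ.erase i, G i j := by
    calc ∑ a' : Fin N, ∑ b' ∈ Finset.univ.erase a', pexp (fun π => G (π a') (π b'))
        = ∑ a' : Fin N, pexp (fun π => ∑ b' ∈ Finset.univ.erase a', G (π a') (π b')) :=
          Finset.sum_congr rfl fun a' _ => (pexp_sum _ _).symm
      _ = pexp (fun π => ∑ a' : Fin N, ∑ b' ∈ Finset.univ.erase a', G (π a') (π b')) :=
          (pexp_sum _ _).symm
      _ = ∑ i, ∑ j ∈ Finset.univ.erase i, G i j := by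
          have h1 : (fun π : Equiv.Perm (Fin N) =>
              ∑ a' : Fin N, ∑ b' ∈ Finset.univ.erase a', G (π a') (π b'))
              = fun _ => ∑ i, ∑ j ∈ Finset.univ.erase i, G i j := funext hπ
          rw [h1, pexp_const]
  rw [Finset.sum_congr rfl (fun a' _ => Finset.sum_congr rfl
      (fun b' hb' => hconst a' b' (Finset.ne_of_mem_erase hb').symm))] at hsum
  simp only [Finset.sum_const, Finset.card_erase_of_mem (Finset.mem_univ _),
    Finset.card_univ, Fintype.card_fin, nsmul_eq_mul] at hsum
  have hc : ((N - 1 : ℕ) : ℝ) = (N : ℝ) - 1 := by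
    rw [Nat.cast_sub (by omega)]; norm_num
  rw [hc] at hsum
  have hN0 : (N : ℝ) ≠ 0 := Nat.cast_ne_zero.mpr (by omega)
  have hN1 : (N : ℝ) - 1 ≠ 0 := by
    have : (2 : ℝ) ≤ (N : ℝ) := by exact_mod_cast hN
    linarith
  rw [eq_div_iff (mul_ne_zero hN0 hN1), ← hsum]
  ring

lemma key_sum {N Q : ℕ} (hN : 3 ≤ N) (Y : Fin N → Fin Q → ℝ) (a b : Fin Q) :
    ∑ i, Y i a * Y i b = ((N : ℝ) - 1) * Svar Y a b + (N : ℝ) * (Ybar Y a * Ybar Y b) := by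
  have hN0 : (N : ℝ) ≠ 0 := Nat.cast_ne_zero.mpr (by omega)
  have hN1 : (N : ℝ) - 1 ≠ 0 := by
    have : (3 : ℝ) ≤ (N : ℝ) := by exact_mod_cast hN
    linarith
  have hYb : ∀ c : Fin Q, ∑ i, Y i c = (N : ℝ) * Ybar Y c := by
    intro c; unfold Ybar; field_simp
  have hSv : ((N : ℝ) - 1) * Svar Y a b
      = ∑ i, (Y i a - Ybar Y a) * (Y i b - Ybar Y b) := by
    unfold Svar; field_simp
  have expand : ∀ i : Fin N, Y i a * Y i b
      = ((Y i a - Ybar Y a) * (Y i b - Ybar Y b) + Ybar Y b * Y i a)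
        + (Ybar Y a * Y i b - Ybar Y a * Ybar Y b) := fun i => by ring
  rw [Finset.sum_congr rfl (fun i _ => expand i), Finset.sum_add_distrib,
    Finset.sum_add_distrib, Finset.sum_sub_distrib, ← Finset.mul_sum, ← Finset.mul_sum,
    Finset.sum_const, Finset.card_univ, Fintype.card_fin, nsmul_eq_mul, hYb a, hYb b, ← hSv]
  ring

lemma Yobs_eq {N Q : ℕ} (Y : Fin N → Fin Q → ℝ) (z : Fin N → Fin Q) {q : Fin Q} {u : Fin N}
    (hu : Finset.univ.filter (fun i => z i = q) = {u}) (π : Equiv.Perm (Fin N)) :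
    Yobs Y z π q = Y (π⁻¹ u) q := by
  unfold Yobs
  have hiff : ∀ i : Fin N, (z (π i) = q) ↔ i = π⁻¹ u := by
    intro i
    constructor
    · intro h
      have h2 : π i ∈ ({u} : Finset (Fin N)) :=
        hu ▸ (Finset.mem_filter.mpr ⟨Finset.mem_univ _, h⟩)
      have h3 := Finset.mem_singleton.mp h2
      rw [← h3]; simp
    · intro h; subst h
      have h2 : u ∈ Finset.univ.filter (fun i => z i = q) :=
        hu ▸ Finset.mem_singleton_self u
      have h3 := (Finset.mem_filter.mp h2).2
      simpa using h3
  calc (∑ i, if z (π i) = q then Y i q else 0)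
      = ∑ i, (if i = π⁻¹ u then Y i q else 0) :=
        Finset.sum_congr rfl fun i _ => by rw [if_congr (hiff i) rfl rfl]
    _ = Y (π⁻¹ u) q := by rw [Finset.sum_ite_eq' Finset.univ (π⁻¹ u) (fun i => Y i q)]; simp

lemma momA {N Q : ℕ} (hN : 3 ≤ N) (Y : Fin N → Fin Q → ℝ) (z : Fin N → Fin Q) {q : Fin Q}
    {u : Fin N} (hu : Finset.univ.filter (fun i => z i = q) = {u}) :
    pexp (fun π => Yobs Y z π q) = Ybar Y q := by
  have h1 : (fun π : Equiv.Perm (Fin N) => Yobs Y z π q)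
      = fun π : Equiv.Perm (Fin N) => Y (π⁻¹ u) q :=
    funext fun π => Yobs_eq Y z hu π
  rw [h1]
  exact (pexp_comp_inv (fun σ : Equiv.Perm (Fin N) => Y (σ u) q)).trans
    ((pexp_single (by omega) (fun i => Y i q) u).trans rfl)

lemma momProd {N Q : ℕ} (hN : 3 ≤ N) (Y : Fin N → Fin Q → ℝ) (z : Fin N → Fin Q)
    {a b : Fin Q} {u v : Fin N}
    (hu : Finset.univ.filter (fun i => z i = a) = {u})
    (hv : Finset.univ.filter (fun i => z i = b) = {v}) :
    pexp (fun π => Yobs Y z π a * Yobs Y z π b)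
      = Ybar Y a * Ybar Y b + ((if a = b then Svar Y a a else 0) - Svar Y a b / (N : ℝ)) := by
  have hN0 : (N : ℝ) ≠ 0 := Nat.cast_ne_zero.mpr (by omega)
  have hN1 : (N : ℝ) - 1 ≠ 0 := by
    have : (3 : ℝ) ≤ (N : ℝ) := by exact_mod_cast hN
    linarith
  by_cases hab : a = b
  · subst hab
    have h1 : (fun π : Equiv.Perm (Fin N) => Yobs Y z π a * Yobs Y z π a)
        = fun π : Equiv.Perm (Fin N) => Y (π⁻¹ u) a * Y (π⁻¹ u) a :=
      funext fun π => by rw [Yobs_eq Y z hu π]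
    rw [h1,
      (pexp_comp_inv (fun σ : Equiv.Perm (Fin N) => Y (σ u) a * Y (σ u) a)),
      pexp_single (by omega) (fun i => Y i a * Y i a) u, key_sum hN Y a a]
    simp only [if_pos rfl]
    field_simp
    rw [if_pos trivial]
    ring
  · have huv : u ≠ v := by
      intro h
      have h2 : u ∈ Finset.univ.filter (fun i => z i = a) := hu ▸ Finset.mem_singleton_self u
      have h3 : v ∈ Finset.univ.filter (fun i => z i = b) := hv ▸ Finset.mem_singleton_self v
      apply hab
      rw [← (Finset.mem_filter.mp h2).2, ← (Finset.mem_filter.mp h3).2, h]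
    have h1 : (fun π : Equiv.Perm (Fin N) => Yobs Y z π a * Yobs Y z π b)
        = fun π : Equiv.Perm (Fin N) => Y (π⁻¹ u) a * Y (π⁻¹ v) b :=
      funext fun π => by rw [Yobs_eq Y z hu π, Yobs_eq Y z hv π]
    rw [h1,
      (pexp_comp_inv (fun σ : Equiv.Perm (Fin N) => Y (σ u) a * Y (σ v) b)),
      pexp_pair (by omega) (fun i j => Y i a * Y j b) huv]
    have hinner : ∀ i : Fin N, (∑ j ∈ Finset.univ.erase i, Y i a * Y j b)
        = Y i a * (∑ j, Y j b) - Y i a * Y i b := by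
      intro i
      rw [eq_sub_iff_add_eq, Finset.sum_erase_add _ _ (Finset.mem_univ i), ← Finset.mul_sum]
    rw [Finset.sum_congr rfl (fun i _ => hinner i), Finset.sum_sub_distrib]
    have hYb : ∀ c : Fin Q, ∑ i, Y i c = (N : ℝ) * Ybar Y c := by
      intro c; unfold Ybar; field_simp
    rw [← Finset.sum_mul, hYb a, hYb b, key_sum hN Y a b, if_neg hab]
    field_simp
    ring

lemma rayleigh_le_lamMax {n : Type*} [Fintype n] (A : Matrix n n ℝ) (x : n → ℝ)
    (hx : (∑ i, x i ^ 2) = 1) : x ⬝ᵥ A.mulVec x ≤ lamMax A := by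
  have hbdd : BddAbove (Set.range fun y : {y : n → ℝ // (∑ i, y i ^ 2) = 1} =>
      y.1 ⬝ᵥ A.mulVec y.1) := by
    refine ⟨∑ a, ∑ b, |A a b|, ?_⟩
    rintro r ⟨y, rfl⟩
    have habs : ∀ a, |y.1 a| ≤ 1 := by
      intro a
      have h1 : y.1 a ^ 2 ≤ 1 := by
        calc y.1 a ^ 2 ≤ ∑ i, y.1 i ^ 2 :=
              Finset.single_le_sum (f := fun i => y.1 i ^ 2)
                (fun i _ => sq_nonneg _) (Finset.mem_univ a)
          _ = 1 := y.2
      exact (sq_le_one_iff_abs_le_one _).mp h1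
    have hexp : y.1 ⬝ᵥ A.mulVec y.1 = ∑ a, ∑ b, y.1 a * (A a b * y.1 b) := by
      simp [dotProduct, Matrix.mulVec, Finset.mul_sum]
    show y.1 ⬝ᵥ A.mulVec y.1 ≤ _
    rw [hexp]
    refine Finset.sum_le_sum fun a _ => Finset.sum_le_sum fun b _ => ?_
    calc y.1 a * (A a b * y.1 b) ≤ |y.1 a * (A a b * y.1 b)| := le_abs_self _
      _ = |y.1 a| * (|A a b| * |y.1 b|) := by rw [abs_mul, abs_mul]
      _ ≤ 1 * (|A a b| * 1) := by
          have h2 := habs a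
          have h3 := habs b
          have h4 : |A a b| * |y.1 b| ≤ |A a b| * 1 :=
            mul_le_mul_of_nonneg_left h3 (abs_nonneg _)
          have h5 : 0 ≤ |A a b| * |y.1 b| := by positivity
          calc |y.1 a| * (|A a b| * |y.1 b|) ≤ 1 * (|A a b| * |y.1 b|) :=
                mul_le_mul_of_nonneg_right h2 h5
            _ ≤ 1 * (|A a b| * 1) := by linarith
      _ = |A a b| := by ring
  exact le_ciSup hbdd (⟨x, hx⟩ : {y : n → ℝ // (∑ i, y i ^ 2) = 1})

end Helpers

set_option maxHeartbeats 2000000 in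
/-- Lemma 1: sample mean and variance estimator under grouping for unreplicated arms. -/
theorem stmt15 (N Q : ℕ) (hN : 3 ≤ N) (hQ : 1 ≤ Q)
    (Nq : Fin Q → ℕ) (hNq : ∀ q, 1 ≤ Nq q) (hsum : (∑ q, Nq q) = N)
    (Y : Fin N → Fin Q → ℝ) (z : Fin N → Fin Q)
    (hz : ∀ q, (Finset.univ.filter fun i => z i = q).card = Nq q)
    (QU : Finset (Fin Q)) (hQU : ∀ q ∈ QU, Nq q = 1)
    (G : Finset (Finset (Fin Q)))
    (hGsub : ∀ g ∈ G, g ⊆ QU) (hGcard : ∀ g ∈ G, 2 ≤ g.card)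
    (hGdisj : ∀ g ∈ G, ∀ g' ∈ G, g ≠ g' → Disjoint g g')
    (hGunion : G.biUnion id = QU)
    (hS : ∀ q ∈ QU, 0 < Svar Y q q) :
    (∀ g ∈ G, pexp (fun π => Yhatg Y z π g) = Ybarg Y g) ∧
    (∀ g ∈ G, (0 : ℝ) ≤ (N : ℝ) - rhoG Y g - ((g.card : ℝ) - 1) →
      ∀ q ∈ g,
        ((0 : ℝ) ≤ muG N g * ((g.card : ℝ) ^ 2)⁻¹
              * (1 - rhoG Y g / (N : ℝ) - ((g.card : ℝ) - 1) / (N : ℝ))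
              * (∑ q' ∈ g.erase q, Svar Y q' q')) ∧
        Svar Y q q
            + muG N g * ((g.card : ℝ) ^ 2)⁻¹
              * (1 - rhoG Y g / (N : ℝ) - ((g.card : ℝ) - 1) / (N : ℝ))
              * (∑ q' ∈ g.erase q, Svar Y q' q')
            + muG N g * (Ybar Y q - Ybarg Y g) ^ 2
          ≤ pexp (fun π => muG N g * (Yobs Y z π q - Yhatg Y z π g) ^ 2)) := by
  have hNr : (3 : ℝ) ≤ (N : ℝ) := by exact_mod_cast hN
  have hNne : (N : ℝ) ≠ 0 := by linarith
  have hN1 : (0 : ℝ) < (N : ℝ) - 1 := by linarith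
  have hfil : ∀ q ∈ QU, ∃ u : Fin N, Finset.univ.filter (fun i => z i = q) = {u} := by
    intro q hq
    have h := hz q
    rw [hQU q hq] at h
    exact Finset.card_eq_one.mp h
  constructor
  · -- part (a)
    intro g hg
    unfold Yhatg Ybarg
    rw [pexp_div, pexp_sum]
    congr 1
    refine Finset.sum_congr rfl fun q hq => ?_
    obtain ⟨u, hu⟩ := hfil q (hGsub g hg hq)
    exact momA hN Y z hu
  · -- part (b)
    intro g hg hρ q hq
    have hqQU : q ∈ QU := hGsub g hg hq
    have hk2 : (2 : ℝ) ≤ (g.card : ℝ) := by exact_mod_cast hGcard g hg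
    set k : ℝ := (g.card : ℝ) with hk
    have hk0 : k ≠ 0 := by linarith
    have hkpos : (0 : ℝ) < k := by linarith
    have hkinv : (0 : ℝ) < 1 - 1 / k := by
      rw [sub_pos, div_lt_one hkpos]; linarith
    have hSqqpos : 0 < Svar Y q q := hS q hqQU
    have hspos : 0 < ∑ q' ∈ g.erase q, Svar Y q' q' := by
      apply Finset.sum_pos
      · intro q' hq'
        exact hS q' (hGsub g hg (Finset.mem_of_mem_erase hq'))
      · apply Finset.card_pos.mp
        rw [Finset.card_erase_of_mem hq]
        have := hGcard g hg
        omega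
    set s : ℝ := ∑ q' ∈ g.erase q, Svar Y q' q' with hsdef
    set Sqq : ℝ := Svar Y q q with hSqqdef
    set ρ : ℝ := rhoG Y g with hρdef
    have h2N : (0 : ℝ) < 1 - 2 / (N : ℝ) := by
      rw [sub_pos, div_lt_one (by linarith : (0 : ℝ) < (N : ℝ))]; linarith
    have hμ1 : muG N g * ((1 - 1 / k) ^ 2 * (1 - 2 / (N : ℝ))) = 1 := by
      unfold muG
      rw [← hk]
      have h2 : (1 : ℝ) - k⁻¹ ≠ 0 := by
        rw [← one_div]; linarith
      have e : (1 - 2 / (N : ℝ))⁻¹ * ((1 - k⁻¹) ^ 2)⁻¹ * ((1 - 1 / k) ^ 2 * (1 - 2 / (N : ℝ)))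
          = ((1 - 2 / (N : ℝ))⁻¹ * (1 - 2 / (N : ℝ))) * (((1 - k⁻¹) ^ 2)⁻¹ * (1 - k⁻¹) ^ 2) := by
        rw [one_div]; ring
      rw [e, inv_mul_cancel₀ h2N.ne', inv_mul_cancel₀ (pow_ne_zero 2 h2), mul_one]
    have hμpos : 0 < muG N g := by
      unfold muG
      rw [← hk]
      apply mul_pos (inv_pos.mpr h2N)
      apply inv_pos.mpr
      apply pow_pos
      rw [← one_div]; linarith
    -- the contrast vector
    set c : Fin Q → ℝ := fun a => (if a = q then 1 else 0) - 1 / k with hc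
    have hcq : c q = 1 - 1 / k := by simp [hc]
    have hcne : ∀ a ∈ g.erase q, c a = -(1 / k) := by
      intro a ha
      simp [hc, (Finset.mem_erase.mp ha).1]
    have hcomb : ∀ F : Fin Q → ℝ, ∑ a ∈ g, c a * F a = F q - (∑ a ∈ g, F a) / k := by
      intro F
      have h1 : ∀ a ∈ g, c a * F a = (if a = q then F a else 0) - F a / k := by
        intro a _
        by_cases h : a = q
        · subst h; simp [hc]; ring
        · simp [hc, h]; ring
      rw [Finset.sum_congr rfl h1, Finset.sum_sub_distrib,
        Finset.sum_ite_eq' g q F, if_pos hq, ← Finset.sum_div]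
    -- centered potential outcomes
    set p : Fin Q → Fin N → ℝ := fun a i => Y i a - Ybar Y a with hp
    have hGram : ∀ a b : Fin Q, ∑ i, p a i * p b i = ((N : ℝ) - 1) * Svar Y a b := by
      intro a b
      unfold Svar
      rw [hp]
      field_simp
    have hGramSum : ∀ (d : Fin Q → ℝ) (t : Finset (Fin Q)),
        ∑ i, (∑ a ∈ t, d a * p a i) ^ 2
          = ((N : ℝ) - 1) * ∑ a ∈ t, ∑ b ∈ t, d a * d b * Svar Y a b := by
      intro d t
      have h1 : ∀ i : Fin N, (∑ a ∈ t, d a * p a i) ^ 2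
          = ∑ a ∈ t, ∑ b ∈ t, (d a * d b) * (p a i * p b i) := by
        intro i
        rw [sq, Finset.sum_mul_sum]
        exact Finset.sum_congr rfl fun a _ => Finset.sum_congr rfl fun b _ => by ring
      rw [Finset.sum_congr rfl fun i _ => h1 i, Finset.sum_comm, Finset.mul_sum]
      refine Finset.sum_congr rfl fun a _ => ?_
      rw [Finset.sum_comm, Finset.mul_sum]
      refine Finset.sum_congr rfl fun b _ => ?_
      rw [← Finset.mul_sum, hGram a b]
      ring
    -- second moments
    have hmom : ∀ a ∈ g, ∀ b ∈ g, pexp (fun π => Yobs Y z π a * Yobs Y z π b)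
        = Ybar Y a * Ybar Y b + ((if a = b then Svar Y a a else 0) - Svar Y a b / (N : ℝ)) := by
      intro a ha b hb
      obtain ⟨u, hu⟩ := hfil a (hGsub g hg ha)
      obtain ⟨v, hv⟩ := hfil b (hGsub g hg hb)
      exact momProd hN Y z hu hv
    -- identity for the deviation
    have hW : ∀ π : Equiv.Perm (Fin N),
        Yobs Y z π q - Yhatg Y z π g = ∑ a ∈ g, c a * Yobs Y z π a := by
      intro π
      rw [hcomb (fun a => Yobs Y z π a)]
      rfl
    have hB : Ybar Y q - Ybarg Y g = ∑ a ∈ g, c a * Ybar Y a := by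
      rw [hcomb (fun a => Ybar Y a)]
      rfl
    -- expectation of the squared deviation
    have hEW2 : pexp (fun π => (Yobs Y z π q - Yhatg Y z π g) ^ 2)
        = (Ybar Y q - Ybarg Y g) ^ 2 + (∑ a ∈ g, c a ^ 2 * Svar Y a a)
          - (∑ a ∈ g, ∑ b ∈ g, c a * c b * Svar Y a b) / (N : ℝ) := by
      have hsq : (fun π : Equiv.Perm (Fin N) => (Yobs Y z π q - Yhatg Y z π g) ^ 2)
          = fun π => ∑ a ∈ g, ∑ b ∈ g, (c a * c b) * (Yobs Y z π a * Yobs Y z π b) := by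
        funext π
        rw [hW π, sq, Finset.sum_mul_sum]
        exact Finset.sum_congr rfl fun a _ => Finset.sum_congr rfl fun b _ => by ring
      rw [hsq, pexp_sum]
      have h3 : ∀ a ∈ g, pexp (fun π => ∑ b ∈ g, (c a * c b) * (Yobs Y z π a * Yobs Y z π b))
          = ∑ b ∈ g, (c a * c b)
              * (Ybar Y a * Ybar Y b + ((if a = b then Svar Y a a else 0) - Svar Y a b / (N : ℝ))) := by
        intro a ha
        rw [pexp_sum]
        exact Finset.sum_congr rfl fun b hb => by rw [pexp_smul, hmom a ha b hb]
      rw [Finset.sum_congr rfl h3]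
      have hsplit : ∀ a ∈ g, ∀ b ∈ g, (c a * c b)
          * (Ybar Y a * Ybar Y b + ((if a = b then Svar Y a a else 0) - Svar Y a b / (N : ℝ)))
          = ((c a * Ybar Y a) * (c b * Ybar Y b)
              + (if a = b then (c a * c b) * Svar Y a a else 0))
            - (c a * c b * Svar Y a b) / (N : ℝ) := by
        intro a _ b _
        by_cases h : a = b <;> simp [h] <;> ring
      rw [Finset.sum_congr rfl fun a ha => Finset.sum_congr rfl fun b hb => hsplit a ha b hb]
      simp only [Finset.sum_sub_distrib, Finset.sum_add_distrib]
      have e1 : ∑ a ∈ g, ∑ b ∈ g, (c a * Ybar Y a) * (c b * Ybar Y b)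
          = (Ybar Y q - Ybarg Y g) ^ 2 := by
        rw [← Finset.sum_mul_sum, hB]
        ring
      have e2 : ∀ a ∈ g, (∑ b ∈ g, if a = b then (c a * c b) * Svar Y a a else 0)
          = c a ^ 2 * Svar Y a a := by
        intro a ha
        rw [Finset.sum_ite_eq g a (fun b => (c a * c b) * Svar Y a a), if_pos ha]
        ring
      have e3 : ∑ a ∈ g, ∑ b ∈ g, c a * c b * Svar Y a b / (N : ℝ)
          = (∑ a ∈ g, ∑ b ∈ g, c a * c b * Svar Y a b) / (N : ℝ) := by
        rw [Finset.sum_div]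
        exact Finset.sum_congr rfl fun a _ => by rw [Finset.sum_div]
      rw [e1, Finset.sum_congr rfl e2, e3]
    -- the diagonal sum
    have hD : (∑ a ∈ g, c a ^ 2 * Svar Y a a) = (1 - 1 / k) ^ 2 * Sqq + (1 / k ^ 2) * s := by
      rw [← Finset.add_sum_erase g _ hq, hcq]
      have h1 : ∀ a ∈ g.erase q, c a ^ 2 * Svar Y a a = (1 / k ^ 2) * Svar Y a a := by
        intro a ha
        rw [hcne a ha]
        ring
      rw [Finset.sum_congr rfl h1, ← Finset.mul_sum, ← hsdef, ← hSqqdef]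
    -- splitting the contrast into lead term and rest
    have hvsplit : ∀ i : Fin N, ∑ a ∈ g, c a * p a i
        = (1 - 1 / k) * p q i - (1 / k) * (∑ a ∈ g.erase q, p a i) := by
      intro i
      rw [← Finset.add_sum_erase g _ hq, hcq]
      have h1 : ∀ a ∈ g.erase q, c a * p a i = -((1 / k) * p a i) := by
        intro a ha
        rw [hcne a ha]
        ring
      rw [Finset.sum_congr rfl h1, Finset.sum_neg_distrib, ← Finset.mul_sum]
      ring
    have hpq : ∑ i, p q i ^ 2 = ((N : ℝ) - 1) * Sqq := by
      rw [hSqqdef, ← hGram q q]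
      exact Finset.sum_congr rfl fun i _ => pow_two (p q i)
    set U : ℝ := ∑ i, (∑ a ∈ g.erase q, p a i) ^ 2 with hUdef
    have hF1 : ∑ i, (∑ a ∈ g, c a * p a i) ^ 2
        ≤ 2 * (1 - 1 / k) ^ 2 * (((N : ℝ) - 1) * Sqq) + (2 / k ^ 2) * U := by
      calc ∑ i, (∑ a ∈ g, c a * p a i) ^ 2
          ≤ ∑ i, (2 * ((1 - 1 / k) * p q i) ^ 2
              + 2 * ((1 / k) * (∑ a ∈ g.erase q, p a i)) ^ 2) := by
            refine Finset.sum_le_sum fun i _ => ?_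
            rw [hvsplit i]
            nlinarith [sq_nonneg ((1 - 1 / k) * p q i + (1 / k) * (∑ a ∈ g.erase q, p a i))]
        _ = 2 * (1 - 1 / k) ^ 2 * (∑ i, p q i ^ 2) + (2 / k ^ 2) * U := by
            rw [Finset.sum_add_distrib]
            congr 1
            · rw [Finset.sum_congr rfl fun i _ => (by ring :
                2 * ((1 - 1 / k) * p q i) ^ 2 = (2 * (1 - 1 / k) ^ 2) * p q i ^ 2),
                ← Finset.mul_sum]
            · rw [Finset.sum_congr rfl fun i _ => (by ring :
                2 * ((1 / k) * (∑ a ∈ g.erase q, p a i)) ^ 2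
                  = (2 / k ^ 2) * (∑ a ∈ g.erase q, p a i) ^ 2),
                ← Finset.mul_sum]
        _ = 2 * (1 - 1 / k) ^ 2 * (((N : ℝ) - 1) * Sqq) + (2 / k ^ 2) * U := by rw [hpq]
    have hcard : ((g.erase q).card : ℝ) = k - 1 := by
      rw [Finset.card_erase_of_mem hq, Nat.cast_sub (by have := hGcard g hg; omega)]
      simp [hk]
    have hF2 : U ≤ (k - 1) * (((N : ℝ) - 1) * s) := by
      calc U ≤ ∑ i, ((g.erase q).card : ℝ) * ∑ a ∈ g.erase q, p a i ^ 2 :=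
            Finset.sum_le_sum fun i _ => by
              exact_mod_cast sq_sum_le_card_mul_sum_sq
                (s := g.erase q) (f := fun a => p a i)
        _ = ((g.erase q).card : ℝ) * ∑ a ∈ g.erase q, ∑ i, p a i ^ 2 := by
            rw [← Finset.mul_sum, Finset.sum_comm]
        _ = (k - 1) * (((N : ℝ) - 1) * s) := by
            rw [hcard]
            congr 1
            rw [hsdef, Finset.mul_sum]
            refine Finset.sum_congr rfl fun a _ => ?_
            rw [Finset.sum_congr rfl fun i _ => pow_two (p a i), hGram a a]
    -- Rayleigh bound
    have hg_pos : ∀ a ∈ g, 0 < Svar Y a a := fun a ha => hS a (hGsub g hg ha)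
    have hUg : U = ((N : ℝ) - 1) * ∑ a ∈ g.erase q, ∑ b ∈ g.erase q, Svar Y a b := by
      have h := hGramSum (fun _ => (1 : ℝ)) (g.erase q)
      simp only [one_mul] at h
      exact h
    set R : Matrix {r : Fin Q // r ∈ g} {r : Fin Q // r ∈ g} ℝ :=
      Matrix.of fun a b => Svar Y a.1 b.1 / Real.sqrt (Svar Y a.1 a.1 * Svar Y b.1 b.1) with hR
    set x : {r : Fin Q // r ∈ g} → ℝ :=
      fun a => if a.1 = q then 0 else Real.sqrt (Svar Y a.1 a.1) / Real.sqrt s with hxdef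
    have hxsum : (∑ a, x a ^ 2) = 1 := by
      have h1 : ∀ a : {r : Fin Q // r ∈ g},
          x a ^ 2 = (if a.1 = q then 0 else Svar Y a.1 a.1 / s) := by
        intro a
        by_cases h : a.1 = q
        · simp [hxdef, h]
        · rw [hxdef]
          simp only [if_neg h]
          rw [div_pow, Real.sq_sqrt (hg_pos a.1 a.2).le, Real.sq_sqrt hspos.le]
      calc (∑ a, x a ^ 2)
          = ∑ a : {r : Fin Q // r ∈ g}, (if a.1 = q then 0 else Svar Y a.1 a.1 / s) :=
            Finset.sum_congr rfl fun a _ => h1 a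
        _ = ∑ r ∈ g, (if r = q then 0 else Svar Y r r / s) :=
            Finset.sum_coe_sort g (fun r => if r = q then 0 else Svar Y r r / s)
        _ = 1 := by
            rw [← Finset.add_sum_erase g _ hq, if_pos rfl, zero_add,
              Finset.sum_congr rfl fun a ha => if_neg (Finset.mem_erase.mp ha).1,
              ← Finset.sum_div, ← hsdef, div_self hspos.ne']
    have hval : x ⬝ᵥ R.mulVec x
        = (∑ a ∈ g.erase q, ∑ b ∈ g.erase q, Svar Y a b) / s := by
      have hterm : ∀ a b : {r : Fin Q // r ∈ g}, x a * (R a b * x b)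
          = (if a.1 = q then 0 else if b.1 = q then 0 else Svar Y a.1 b.1 / s) := by
        intro a b
        by_cases ha : a.1 = q
        · simp [hxdef, ha]
        · by_cases hb : b.1 = q
          · simp [hxdef, ha, hb]
          · have hA := hg_pos a.1 a.2
            have hBp := hg_pos b.1 b.2
            rw [hxdef]
            simp only [if_neg ha, if_neg hb, hR, Matrix.of_apply]
            rw [Real.sqrt_mul hA.le]
            have h1 : Real.sqrt (Svar Y a.1 a.1) ≠ 0 := (Real.sqrt_pos.mpr hA).ne'
            have h2 : Real.sqrt (Svar Y b.1 b.1) ≠ 0 := (Real.sqrt_pos.mpr hBp).ne'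
            have h4 : Real.sqrt s * Real.sqrt s = s := Real.mul_self_sqrt hspos.le
            calc Real.sqrt (Svar Y a.1 a.1) / Real.sqrt s
                  * (Svar Y a.1 b.1 / (Real.sqrt (Svar Y a.1 a.1) * Real.sqrt (Svar Y b.1 b.1))
                    * (Real.sqrt (Svar Y b.1 b.1) / Real.sqrt s))
                = Svar Y a.1 b.1
                    * ((Real.sqrt (Svar Y a.1 a.1) / Real.sqrt (Svar Y a.1 a.1))
                      * (Real.sqrt (Svar Y b.1 b.1) / Real.sqrt (Svar Y b.1 b.1)))
                    / (Real.sqrt s * Real.sqrt s) := by ring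
              _ = Svar Y a.1 b.1 / (Real.sqrt s * Real.sqrt s) := by
                  rw [div_self h1, div_self h2]; ring
              _ = Svar Y a.1 b.1 / s := by rw [h4]
      have hexp : x ⬝ᵥ R.mulVec x = ∑ a, ∑ b, x a * (R a b * x b) := by
        simp [dotProduct, Matrix.mulVec, Finset.mul_sum]
      rw [hexp, Finset.sum_congr rfl fun a _ => Finset.sum_congr rfl fun b _ => hterm a b]
      have hinner : ∀ a : {r : Fin Q // r ∈ g},
          (∑ b : {r : Fin Q // r ∈ g},
            (if a.1 = q then 0 else if b.1 = q then 0 else Svar Y a.1 b.1 / s))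
          = ∑ t ∈ g, (if a.1 = q then 0 else if t = q then 0 else Svar Y a.1 t / s) :=
        fun a => Finset.sum_coe_sort g
          (fun t => if a.1 = q then 0 else if t = q then 0 else Svar Y a.1 t / s)
      rw [Finset.sum_congr rfl fun a _ => hinner a]
      calc (∑ a : {r : Fin Q // r ∈ g},
            ∑ t ∈ g, (if a.1 = q then 0 else if t = q then 0 else Svar Y a.1 t / s))
          = ∑ r ∈ g, ∑ t ∈ g, (if r = q then 0 else if t = q then 0 else Svar Y r t / s) :=
            Finset.sum_coe_sort g
              (fun r => ∑ t ∈ g, (if r = q then 0 else if t = q then 0 else Svar Y r t / s))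
        _ = ∑ r ∈ g.erase q, ∑ t ∈ g.erase q, Svar Y r t / s := by
            rw [← Finset.add_sum_erase g _ hq]
            have hrow : (∑ t ∈ g, if q = q then 0 else if t = q then 0 else Svar Y q t / s)
                = 0 := by simp
            rw [hrow, zero_add]
            refine Finset.sum_congr rfl fun r hr => ?_
            have hrne := (Finset.mem_erase.mp hr).1
            rw [Finset.sum_congr rfl fun t _ => if_neg hrne,
              ← Finset.add_sum_erase g _ hq, if_pos rfl, zero_add]
            exact Finset.sum_congr rfl fun t ht => if_neg (Finset.mem_erase.mp ht).1
        _ = (∑ a ∈ g.erase q, ∑ b ∈ g.erase q, Svar Y a b) / s := by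
            rw [Finset.sum_div]
            exact Finset.sum_congr rfl fun r _ => by rw [Finset.sum_div]
    have hρR : lamMax R = ρ := rfl
    have hray : (∑ a ∈ g.erase q, ∑ b ∈ g.erase q, Svar Y a b) / s ≤ ρ := by
      rw [← hval, ← hρR]
      exact rayleigh_le_lamMax R x hxsum
    have h20 : (∑ a ∈ g.erase q, ∑ b ∈ g.erase q, Svar Y a b) ≤ ρ * s :=
      (div_le_iff₀ hspos).mp hray
    have hF3 : U ≤ ρ * (((N : ℝ) - 1) * s) := by
      rw [hUg]
      calc ((N : ℝ) - 1) * ∑ a ∈ g.erase q, ∑ b ∈ g.erase q, Svar Y a b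
          ≤ ((N : ℝ) - 1) * (ρ * s) := mul_le_mul_of_nonneg_left h20 hN1.le
        _ = ρ * (((N : ℝ) - 1) * s) := by ring
    -- conclusion
    refine ⟨?_, ?_⟩
    · have h13 : (0 : ℝ) ≤ 1 - ρ / (N : ℝ) - (k - 1) / (N : ℝ) := by
        have he : 1 - ρ / (N : ℝ) - (k - 1) / (N : ℝ) = ((N : ℝ) - ρ - (k - 1)) / (N : ℝ) := by
          field_simp
        rw [he]
        exact div_nonneg hρ (by linarith)
      exact mul_nonneg (mul_nonneg (mul_nonneg hμpos.le (inv_nonneg.mpr (sq_nonneg k))) h13) hspos.le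
    · have hT3 := hGramSum c g
      set T3 : ℝ := ∑ a ∈ g, ∑ b ∈ g, c a * c b * Svar Y a b with hT3def
      have hT3le : T3 ≤ 2 * (1 - 1 / k) ^ 2 * Sqq + ((ρ + (k - 1)) / k ^ 2) * s := by
        have h8 : U + U ≤ ρ * (((N : ℝ) - 1) * s) + (k - 1) * (((N : ℝ) - 1) * s) :=
          add_le_add hF3 hF2
        have h9 : (0 : ℝ) ≤ 1 / k ^ 2 := by positivity
        have h7 : (2 / k ^ 2) * U
            ≤ (1 / k ^ 2) * (ρ * (((N : ℝ) - 1) * s) + (k - 1) * (((N : ℝ) - 1) * s)) := by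
          calc (2 / k ^ 2) * U = (1 / k ^ 2) * (U + U) := by ring
            _ ≤ _ := mul_le_mul_of_nonneg_left h8 h9
        have h6 : ((N : ℝ) - 1) * T3
            ≤ ((N : ℝ) - 1) * (2 * (1 - 1 / k) ^ 2 * Sqq + ((ρ + (k - 1)) / k ^ 2) * s) := by
          rw [← hT3]
          calc ∑ i, (∑ a ∈ g, c a * p a i) ^ 2
              ≤ 2 * (1 - 1 / k) ^ 2 * (((N : ℝ) - 1) * Sqq) + (2 / k ^ 2) * U := hF1
            _ ≤ 2 * (1 - 1 / k) ^ 2 * (((N : ℝ) - 1) * Sqq)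
                + (1 / k ^ 2) * (ρ * (((N : ℝ) - 1) * s) + (k - 1) * (((N : ℝ) - 1) * s)) := by
                linarith
            _ = ((N : ℝ) - 1) * (2 * (1 - 1 / k) ^ 2 * Sqq + ((ρ + (k - 1)) / k ^ 2) * s) := by
                ring
        exact le_of_mul_le_mul_left h6 hN1
      have hsmul : pexp (fun π => muG N g * (Yobs Y z π q - Yhatg Y z π g) ^ 2)
          = muG N g * pexp (fun π => (Yobs Y z π q - Yhatg Y z π g) ^ 2) := pexp_smul _ _
      rw [hsmul, hEW2, hD]
      have hstep : muG N g * (((1 - 1 / k) ^ 2 * Sqq + (1 / k ^ 2) * s)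
            - (2 * (1 - 1 / k) ^ 2 * Sqq + ((ρ + (k - 1)) / k ^ 2) * s) / (N : ℝ))
          = Sqq + muG N g * (k ^ 2)⁻¹ * (1 - ρ / (N : ℝ) - (k - 1) / (N : ℝ)) * s := by
        linear_combination Sqq * hμ1
      have h14 : T3 / (N : ℝ)
          ≤ (2 * (1 - 1 / k) ^ 2 * Sqq + ((ρ + (k - 1)) / k ^ 2) * s) / (N : ℝ) :=
        (div_le_div_iff_of_pos_right (by linarith : (0 : ℝ) < (N : ℝ))).mpr hT3le
      have hmono : muG N g * (((1 - 1 / k) ^ 2 * Sqq + (1 / k ^ 2) * s)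
            - (2 * (1 - 1 / k) ^ 2 * Sqq + ((ρ + (k - 1)) / k ^ 2) * s) / (N : ℝ))
          ≤ muG N g * (((1 - 1 / k) ^ 2 * Sqq + (1 / k ^ 2) * s) - T3 / (N : ℝ)) := by
        apply mul_le_mul_of_nonneg_left _ hμpos.le
        linarith
      have hfinal : muG N g * ((Ybar Y q - Ybarg Y g) ^ 2
            + ((1 - 1 / k) ^ 2 * Sqq + (1 / k ^ 2) * s) - T3 / (N : ℝ))
          = muG N g * (Ybar Y q - Ybarg Y g) ^ 2
            + muG N g * (((1 - 1 / k) ^ 2 * Sqq + (1 / k ^ 2) * s) - T3 / (N : ℝ)) := by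
        ring
      linarith [hstep, hmono, hfinal]
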